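/- Let X be a finite 2-Frobenius group: there exist proper normal subgroups K ≤ L of X such that L is a Frobenius group with kernel K and X/K is a Frobenius group with kernel L/K. Then the commuting graph Γ(X) is disconnected. More precisely, if J is a complement to K in L, then C_X(j) ≤ J for every nonidentity j ∈ J. -/

import Mathlib

def commGraph (G : Type*) [Group G] : SimpleGraph {g : G // g ≠ 1} where
  Adj a b := a ≠ b ∧ Commute (a : G) (b : G)
  symm := ⟨fun _ _ h => ⟨Ne.symm h.1, h.2.symm⟩⟩
  loopless := ⟨fun _ h => h.1 rfl⟩

/-- `X` is a Frobenius group with kernel `N`: `N` is a nontrivial proper normal subgroup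
admitting a complement `H` with `H ∩ H^g = 1` for `g ∉ H`. -/
def IsFrobeniusWithKernel {X : Type*} [Group X] (N : Subgroup X) : Prop :=
  N.Normal ∧ N ≠ ⊥ ∧ N ≠ ⊤ ∧
    ∃ H : Subgroup X, N ⊓ H = ⊥ ∧ N ⊔ H = ⊤ ∧
      ∀ g : X, g ∉ H → ∀ x : X, x ∈ H → g * x * g⁻¹ ∈ H → x = 1

section Aux

variable {Y : Type*} [Group Y]

/-- Malnormality of the complement gives a fixed-point-free action on the kernel. -/
lemma fpf_of_malnormal (N H : Subgroup Y) (hb : N ⊓ H = ⊥)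
    (mal : ∀ g : Y, g ∉ H → ∀ x : Y, x ∈ H → g * x * g⁻¹ ∈ H → x = 1) :
    ∀ h ∈ H, h ≠ 1 → ∀ n ∈ N, n * h = h * n → n = 1 := by
  intro h hh hne n hn hc
  by_cases hnH : n ∈ H
  · have : n ∈ N ⊓ H := ⟨hn, hnH⟩
    rw [hb, Subgroup.mem_bot] at this
    exact this
  · exfalso
    apply hne
    apply mal n hnH h hh
    have e : n * h * n⁻¹ = h := by rw [hc, mul_inv_cancel_right]
    rw [e]; exact hh

/-- In a finite group that is a semidirect product `N ⋊ H` with `H` acting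
fixed-point-freely on `N`, centralizers of nontrivial elements of `N` lie in `N`. -/
lemma kernel_centralizer [Finite Y] (N H : Subgroup Y) (hNn : N.Normal)
    (ht : N ⊔ H = ⊤)
    (fpf : ∀ h ∈ H, h ≠ 1 → ∀ n ∈ N, n * h = h * n → n = 1) :
    ∀ n ∈ N, n ≠ 1 → ∀ c : Y, c * n = n * c → c ∈ N := by
  haveI := hNn
  intro n hn hne c hc
  have hc' : c ∈ (↑(N ⊔ H) : Set Y) := by rw [ht]; trivial
  rw [Subgroup.normal_mul] at hc'
  obtain ⟨a, ha, h, hh, rfl⟩ := hc'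
  replace hc : a * h * n = n * (a * h) := hc
  by_cases hh1 : h = 1
  · simpa [hh1] using ha
  · exfalso
    -- the map x ↦ x h x⁻¹ h⁻¹ on N is injective, hence surjective
    set f : N → N := fun x => ⟨(x : Y) * h * (x : Y)⁻¹ * h⁻¹, by
      have h1 : (x : Y) * ((h * (x : Y)⁻¹ * h⁻¹)) ∈ N :=
        N.mul_mem x.2 (hNn.conj_mem _ (N.inv_mem x.2) h)
      simpa [mul_assoc] using h1⟩ with hf
    have hinj : Function.Injective f := by
      intro x y hxy
      have h1 : (x : Y) * h * (x : Y)⁻¹ = (y : Y) * h * (y : Y)⁻¹ := by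
        have := congrArg (fun z : N => (z : Y) * h) hxy
        simpa [hf, mul_assoc] using this
      have e : ((y : Y)⁻¹ * x) * h * ((y : Y)⁻¹ * x)⁻¹ = h := by
        calc ((y : Y)⁻¹ * x) * h * ((y : Y)⁻¹ * x)⁻¹
            = (y : Y)⁻¹ * ((x : Y) * h * (x : Y)⁻¹) * y := by group
          _ = (y : Y)⁻¹ * ((y : Y) * h * (y : Y)⁻¹) * y := by rw [h1]
          _ = h := by group
      have hcm : ((y : Y)⁻¹ * x) * h = h * ((y : Y)⁻¹ * x) := by
        calc ((y : Y)⁻¹ * x) * h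
            = (((y : Y)⁻¹ * x) * h * ((y : Y)⁻¹ * x)⁻¹) * ((y : Y)⁻¹ * x) := by group
          _ = h * ((y : Y)⁻¹ * x) := by rw [e]
      have h2 := fpf h hh hh1 _ (N.mul_mem (N.inv_mem y.2) x.2) hcm
      exact (Subtype.ext (inv_mul_eq_one.mp h2)).symm
    have hsurj : Function.Surjective f := Finite.surjective_of_injective hinj
    obtain ⟨x, hx⟩ := hsurj ⟨a, ha⟩
    have hxa : (x : Y) * h * (x : Y)⁻¹ * h⁻¹ = a := congrArg Subtype.val hx
    have key : a * h = (x : Y) * h * (x : Y)⁻¹ := by rw [← hxa]; group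
    rw [key] at hc
    -- now x⁻¹ n x commutes with h
    have h3 : ((x : Y)⁻¹ * n * x) * h = h * ((x : Y)⁻¹ * n * x) := by
      calc ((x : Y)⁻¹ * n * x) * h
          = (x : Y)⁻¹ * (n * ((x : Y) * h * (x : Y)⁻¹)) * x := by group
        _ = (x : Y)⁻¹ * (((x : Y) * h * (x : Y)⁻¹) * n) * x := by rw [← hc]
        _ = h * ((x : Y)⁻¹ * n * x) := by group
    have h4 : (x : Y)⁻¹ * n * x ∈ N := by
      have := hNn.conj_mem n hn (x : Y)⁻¹
      simpa [mul_assoc] using this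
    have h5 := fpf h hh hh1 _ h4 h3
    apply hne
    have := congrArg (fun z : Y => (x : Y) * z * (x : Y)⁻¹) h5
    simpa [mul_assoc] using this

/-- In a semidirect product `N ⋊ J` with `J` acting fixed-point-freely on `N`,
centralizers of nontrivial elements of `J` lie in `J`. -/
lemma complement_centralizer (N J : Subgroup Y) (hNn : N.Normal)
    (hb : N ⊓ J = ⊥) (ht : N ⊔ J = ⊤)
    (fpf : ∀ j ∈ J, j ≠ 1 → ∀ n ∈ N, n * j = j * n → n = 1) :
    ∀ j ∈ J, j ≠ 1 → ∀ c : Y, c * j = j * c → c ∈ J := by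
  haveI := hNn
  intro j hj hj1 c hc
  have hc' : c ∈ (↑(N ⊔ J) : Set Y) := by rw [ht]; trivial
  rw [Subgroup.normal_mul] at hc'
  obtain ⟨b, hbN, j', hj', rfl⟩ := hc'
  replace hc : b * j' * j = j * (b * j') := hc
  show b * j' ∈ J
  -- j (b j') j⁻¹ = b j'
  have e : (j * b * j⁻¹) * (j * j' * j⁻¹) = b * j' := by
    calc (j * b * j⁻¹) * (j * j' * j⁻¹) = j * (b * j') * j⁻¹ := by group
      _ = ((b * j') * j) * j⁻¹ := by rw [hc]
      _ = b * j' := by group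
  -- uniqueness of the decomposition
  have e2 : b⁻¹ * (j * b * j⁻¹) = j' * (j * j' * j⁻¹)⁻¹ := by
    calc b⁻¹ * (j * b * j⁻¹)
        = b⁻¹ * ((j * b * j⁻¹) * (j * j' * j⁻¹)) * (j * j' * j⁻¹)⁻¹ := by group
      _ = b⁻¹ * (b * j') * (j * j' * j⁻¹)⁻¹ := by rw [e]
      _ = j' * (j * j' * j⁻¹)⁻¹ := by group
  have hmem : b⁻¹ * (j * b * j⁻¹) ∈ N ⊓ J := by
    constructor
    · exact N.mul_mem (N.inv_mem hbN) (hNn.conj_mem _ hbN j)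
    · rw [e2]
      exact J.mul_mem hj' (J.inv_mem (J.mul_mem (J.mul_mem hj hj') (J.inv_mem hj)))
  rw [hb, Subgroup.mem_bot] at hmem
  have hjb : j * b * j⁻¹ = b := by
    have := congrArg (fun z : Y => b * z) hmem
    simpa using this
  have hcomm : b * j = j * b := by
    calc b * j = (j * b * j⁻¹) * j := by rw [hjb]
      _ = j * b := by group
  have hb1 : b = 1 := fpf j hj hj1 b hbN hcomm
  rw [hb1, one_mul]
  exact hj'

end Aux

theorem stmt2 {X : Type*} [Group X] [Finite X] (K L : Subgroup X)
    (hKn : K.Normal) (hLn : L.Normal) (hKL : K ≤ L) (hKp : K ≠ ⊤) (hLp : L ≠ ⊤)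
    (hLfrob : IsFrobeniusWithKernel (K.subgroupOf L))
    (hQfrob : IsFrobeniusWithKernel (L.map (QuotientGroup.mk' K)))
    (J : Subgroup X) (hJL : J ≤ L) (hJK : J ⊓ K = ⊥) (hJKL : J ⊔ K = L) :
    ¬ (commGraph X).Preconnected ∧
      ∀ j : X, j ∈ J → j ≠ 1 → Subgroup.centralizer {j} ≤ J := by
  haveI := hKn
  obtain ⟨hKLn, hKLbot, hKLtop, H, hbH, htH, malH⟩ := hLfrob
  obtain ⟨hQn, hQbot, hQtop, HQ, hbQ, htQ, malQ⟩ := hQfrob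
  -- fixed-point-freeness in L
  have fpfH := fpf_of_malnormal (K.subgroupOf L) H hbH malH
  -- centralizer of nontrivial kernel elements inside L
  have kcL := kernel_centralizer (K.subgroupOf L) H hKLn htH fpfH
  -- fixed-point-freeness in the quotient
  have fpfQ := fpf_of_malnormal (L.map (QuotientGroup.mk' K)) HQ hbQ malQ
  have kcQ := kernel_centralizer (L.map (QuotientGroup.mk' K)) HQ hQn htQ fpfQ
  -- J acts fixed-point-freely on K (inside L)
  have fpfJ : ∀ j ∈ J.subgroupOf L, j ≠ 1 → ∀ n ∈ K.subgroupOf L,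
      n * j = j * n → n = 1 := by
    intro j hj hj1 n hn hcomm
    by_contra hn1
    have hjK : j ∈ K.subgroupOf L := kcL n hn hn1 j hcomm.symm
    rw [Subgroup.mem_subgroupOf] at hj hjK
    have : (j : X) ∈ J ⊓ K := ⟨hj, hjK⟩
    rw [hJK, Subgroup.mem_bot] at this
    exact hj1 (Subtype.ext this)
  -- K and J are complementary in L, as subgroups of L
  have hbJ : K.subgroupOf L ⊓ J.subgroupOf L = ⊥ := by
    rw [eq_bot_iff]
    intro x hx
    rw [Subgroup.mem_inf] at hx
    obtain ⟨hxK, hxJ⟩ := hx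
    rw [Subgroup.mem_subgroupOf] at hxK hxJ
    have : (x : X) ∈ J ⊓ K := ⟨hxJ, hxK⟩
    rw [hJK, Subgroup.mem_bot] at this
    rw [Subgroup.mem_bot]
    exact Subtype.ext this
  have htJ : K.subgroupOf L ⊔ J.subgroupOf L = ⊤ := by
    rw [eq_top_iff]
    rintro ⟨l, hl⟩ -
    have hl' : l ∈ (↑(J ⊔ K) : Set X) := by rw [hJKL]; exact hl
    rw [Subgroup.mul_normal] at hl'
    obtain ⟨a, haJ, k, hkK, hak⟩ := hl'
    have haL : a ∈ L := hJL haJ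
    have hkL : k ∈ L := hKL hkK
    have heq : (⟨l, hl⟩ : L) = ⟨a, haL⟩ * ⟨k, hkL⟩ := Subtype.ext (by simp [← hak])
    rw [heq]
    exact Subgroup.mul_mem _
      (Subgroup.mem_sup_right (Subgroup.mem_subgroupOf.2 haJ))
      (Subgroup.mem_sup_left (Subgroup.mem_subgroupOf.2 hkK))
  have ccJ := complement_centralizer (K.subgroupOf L) (J.subgroupOf L)
    (hKn.subgroupOf L) hbJ htJ fpfJ
  -- the main centralizer statement
  have main : ∀ j : X, j ∈ J → j ≠ 1 → Subgroup.centralizer {j} ≤ J := by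
    intro j hjJ hj1 x hx
    have hcomm : j * x = x * j := Subgroup.mem_centralizer_iff.1 hx j rfl
    have hjK : j ∉ K := by
      intro h
      have : j ∈ J ⊓ K := ⟨hjJ, h⟩
      rw [hJK, Subgroup.mem_bot] at this
      exact hj1 this
    have hjL : j ∈ L := hJL hjJ
    -- step 1 : x ∈ L, via the quotient Frobenius structure
    have hπj : (QuotientGroup.mk' K j : X ⧸ K) ≠ 1 := by
      simpa [QuotientGroup.eq_one_iff] using hjK
    have hπjmem : QuotientGroup.mk' K j ∈ L.map (QuotientGroup.mk' K) := ⟨j, hjL, rfl⟩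
    have hπcomm : QuotientGroup.mk' K x * QuotientGroup.mk' K j
        = QuotientGroup.mk' K j * QuotientGroup.mk' K x := by
      rw [← map_mul, ← map_mul, hcomm]
    have hmx := kcQ _ hπjmem hπj _ hπcomm
    obtain ⟨l, hlL, hlx⟩ := hmx
    have hxL : x ∈ L := by
      have hK : l⁻¹ * x ∈ K := by
        rw [← QuotientGroup.eq_one_iff]
        show (QuotientGroup.mk' K) (l⁻¹ * x) = 1
        rw [map_mul, map_inv, hlx]
        group
      have := L.mul_mem hlL (hKL hK)
      simpa [mul_inv_cancel_left] using this
    -- step 2 : apply the complement-centralizer lemma inside L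
    have hne : (⟨j, hjL⟩ : L) ≠ 1 := fun h => hj1 (congrArg Subtype.val h)
    have hcm : (⟨x, hxL⟩ : L) * ⟨j, hjL⟩ = ⟨j, hjL⟩ * ⟨x, hxL⟩ :=
      Subtype.ext (by simpa using hcomm.symm)
    have := ccJ ⟨j, hjL⟩ (Subgroup.mem_subgroupOf.2 hjJ) hne ⟨x, hxL⟩ hcm
    exact Subgroup.mem_subgroupOf.1 this
  refine ⟨?_, main⟩
  -- disconnectedness
  have hKneL : K ≠ L := by
    intro h
    exact hKLtop (by rw [h, Subgroup.subgroupOf_self])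
  have hKbot : K ≠ ⊥ := by
    intro h
    exact hKLbot (by rw [h, Subgroup.bot_subgroupOf])
  have hJbot : J ≠ ⊥ := by
    intro h
    exact hKneL (by rw [← hJKL, h, bot_sup_eq])
  obtain ⟨j0, hj0J, hj0⟩ := (J.bot_or_exists_ne_one).resolve_left hJbot
  obtain ⟨k0, hk0K, hk0⟩ := (K.bot_or_exists_ne_one).resolve_left hKbot
  intro hpre
  have hreach := hpre ⟨j0, hj0⟩ ⟨k0, hk0⟩
  have claim : ∀ (a b : {g : X // g ≠ 1}), (commGraph X).Reachable a b →
      (a : X) ∈ J → (b : X) ∈ J := by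
    intro a b r
    obtain ⟨w⟩ := r
    induction w with
    | nil => exact id
    | @cons u v q hadj p ih =>
      intro huJ
      apply ih
      apply main (u : X) huJ u.2
      rw [Subgroup.mem_centralizer_iff]
      rintro g hg
      rw [Set.mem_singleton_iff] at hg
      subst hg
      exact (show u ≠ v ∧ Commute (u : X) (v : X) from hadj).2
  have hk0J : (k0 : X) ∈ J := claim _ _ hreach hj0J
  have : k0 ∈ J ⊓ K := ⟨hk0J, hk0K⟩
  rw [hJK, Subgroup.mem_bot] at this
  exact hk0 this
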